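/- Let D_n = ⟨x, τ | x^n = 1, τ² = 1, τx = x^{-1}τ⟩ be the dihedral group and X, Y ⊆ C_n = ⟨x⟩. The Cayley graph Cay(D_n, X ∪ Yτ) is a directed strongly regular graph with parameters (2n, |X|+|Y|, μ, λ, t) if and only if, in the group ring Z[C_n]: (i) Ȳ·(X̄ + X^{(−1)}‾) = (λ−μ)Ȳ + μ·C̄_n, and (ii) X̄² + Ȳ·Y^{(−1)}‾ = (t−μ)e + (λ−μ)X̄ + μ·C̄_n. -/

import Mathlib

open scoped Classical

noncomputable def adjMat {V : Type*} [Fintype V] (r : V → V → Prop) : Matrix V V ℤ :=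
  Matrix.of fun i j => if r i j then 1 else 0

noncomputable def allOnes (V : Type*) [Fintype V] : Matrix V V ℤ :=
  Matrix.of fun _ _ => 1

/-- `r` is (the adjacency relation of) a directed strongly regular graph with
parameters `(n, k, μ, lam, t)`. -/
def IsDSRG {V : Type*} [Fintype V] [DecidableEq V] (r : V → V → Prop)
    (n k μ lam t : ℤ) : Prop :=
  (∀ i, ¬ r i i) ∧ ((Fintype.card V : ℤ) = n) ∧
  allOnes V * adjMat r = k • allOnes V ∧
  adjMat r * allOnes V = k • allOnes V ∧
  adjMat r * adjMat r =
    t • (1 : Matrix V V ℤ) + lam • adjMat r + μ • (allOnes V - 1 - adjMat r)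

/-- The Cayley digraph relation of `S ⊆ G`: `g → h` iff `g⁻¹ * h ∈ S`. -/
def cayleyRel {G : Type*} [Group G] (S : Finset G) : G → G → Prop :=
  fun g h => g⁻¹ * h ∈ S

/-- The connection set `X ∪ Yτ ⊆ D_n`, with `C_n` realized additively as `ZMod n`,
`x^a` as `DihedralGroup.r a` and `τ = DihedralGroup.sr 0`. -/
noncomputable def dihSet (n : ℕ) (X Y : Finset (ZMod n)) : Finset (DihedralGroup n) :=
  X.image DihedralGroup.r ∪ Y.image (fun a => DihedralGroup.r a * DihedralGroup.sr 0)

/-- `X̄`, the sum of the elements of `X` in the group ring `ℤ[C_n]`. -/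
noncomputable def fbar {n : ℕ} (X : Finset (ZMod n)) : AddMonoidAlgebra ℤ (ZMod n) :=
  ∑ a ∈ X, AddMonoidAlgebra.single a 1

/-- `X^{(−1)}‾`, the sum of the inverses of the elements of `X` in `ℤ[C_n]`. -/
noncomputable def fbarInv {n : ℕ} (X : Finset (ZMod n)) : AddMonoidAlgebra ℤ (ZMod n) :=
  ∑ a ∈ X, AddMonoidAlgebra.single (-a) 1

/-- `C̄_n`, the sum of all elements of `C_n` in `ℤ[C_n]`. -/
noncomputable def cbar (n : ℕ) [NeZero n] : AddMonoidAlgebra ℤ (ZMod n) :=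
  ∑ a : ZMod n, AddMonoidAlgebra.single a 1

/-! ### Auxiliary material -/

set_option linter.unusedSectionVars false

open Finset

section GroupRing

variable {n : ℕ}

/-- Generic single-sum in the group ring. -/
noncomputable def ssum (A : Finset (ZMod n)) (f : ZMod n → ZMod n) : AddMonoidAlgebra ℤ (ZMod n) :=
  ∑ a ∈ A, AddMonoidAlgebra.single (f a) 1

lemma ssum_apply (A : Finset (ZMod n)) (f : ZMod n → ZMod n) (d : ZMod n) :
    (ssum A f).coeff d = ∑ a ∈ A, if f a = d then 1 else 0 := by
  rw [ssum, AddMonoidAlgebra.coeff_sum, Finsupp.finset_sum_apply]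
  exact Finset.sum_congr rfl fun a _ => Finsupp.single_apply

lemma ssum_mul_apply (A B : Finset (ZMod n)) (f g : ZMod n → ZMod n) (d : ZMod n) :
    (ssum A f * ssum B g).coeff d = ∑ a ∈ A, ∑ b ∈ B, if f a + g b = d then (1:ℤ) else 0 := by
  rw [ssum, ssum, Finset.sum_mul]
  simp_rw [Finset.mul_sum, AddMonoidAlgebra.single_mul_single, one_mul]
  rw [AddMonoidAlgebra.coeff_sum, Finsupp.finset_sum_apply]
  exact Finset.sum_congr rfl fun a _ => by
    rw [AddMonoidAlgebra.coeff_sum, Finsupp.finset_sum_apply]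
    exact Finset.sum_congr rfl fun b _ => Finsupp.single_apply

lemma fbar_eq (A : Finset (ZMod n)) : fbar A = ssum A id := rfl

lemma fbarInv_eq (A : Finset (ZMod n)) : fbarInv A = ssum A (fun a => -a) := rfl

lemma fbar_apply (A : Finset (ZMod n)) (d : ZMod n) :
    (fbar A).coeff d = if d ∈ A then 1 else 0 := by
  rw [fbar_eq, ssum_apply]
  simp [Finset.sum_ite_eq' A d]

lemma cbar_apply [NeZero n] (d : ZMod n) : (cbar n).coeff d = 1 := by
  have : cbar n = ssum Finset.univ id := rfl
  rw [this, ssum_apply]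
  simp [Finset.sum_ite_eq' Finset.univ d]

end GroupRing

section MatrixSide

variable {G : Type*} [Group G] [Fintype G] [DecidableEq G]

lemma adj_apply (S : Finset G) (g h : G) :
    adjMat (cayleyRel S) g h = if g⁻¹ * h ∈ S then 1 else 0 := if_congr Iff.rfl rfl rfl

lemma inner_count (S : Finset G) (u d : G) :
    (∑ s' ∈ S, if u * s' = d then (1:ℤ) else 0) = if u⁻¹ * d ∈ S then 1 else 0 := by
  simp_rw [show ∀ s' : G, (u * s' = d) ↔ (s' = u⁻¹ * d) from fun s' => by
    constructor <;> intro h <;> [exact eq_inv_mul_of_mul_eq h; rw [h, mul_inv_cancel_left]]]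
  simp [Finset.sum_ite_eq' S (u⁻¹ * d)]

lemma mulA_apply (S : Finset G) (g h : G) :
    (adjMat (cayleyRel S) * adjMat (cayleyRel S)) g h
      = ∑ s ∈ S, ∑ s' ∈ S, if s * s' = g⁻¹ * h then (1:ℤ) else 0 := by
  rw [Matrix.mul_apply]
  rw [← Equiv.sum_comp (Equiv.mulLeft g) fun k =>
    adjMat (cayleyRel S) g k * adjMat (cayleyRel S) k h]
  simp only [Equiv.coe_mulLeft, adj_apply, inv_mul_cancel_left, mul_inv_rev]
  simp only [ite_mul, one_mul, zero_mul, Finset.sum_ite_mem, Finset.univ_inter]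
  refine Finset.sum_congr rfl fun u hu => ?_
  rw [inner_count S u (g⁻¹ * h), mul_assoc]

lemma rowsum (S : Finset G) (h : G) :
    (∑ k : G, if k⁻¹ * h ∈ S then (1:ℤ) else 0) = S.card := by
  rw [← Equiv.sum_comp ((Equiv.inv G).trans (Equiv.mulLeft h)) fun k => if k⁻¹ * h ∈ S then (1:ℤ) else 0]
  simp [mul_inv_rev, inv_mul_cancel_right]

lemma colsum (S : Finset G) (g : G) :
    (∑ k : G, if g⁻¹ * k ∈ S then (1:ℤ) else 0) = S.card := by
  rw [← Equiv.sum_comp (Equiv.mulLeft g) fun k => if g⁻¹ * k ∈ S then (1:ℤ) else 0]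
  simp

lemma JA_eq (S : Finset G) : allOnes G * adjMat (cayleyRel S) = (S.card : ℤ) • allOnes G := by
  rw [← Matrix.ext_iff]; intro g h
  rw [Matrix.mul_apply]
  simp only [allOnes, Matrix.of_apply, adj_apply, one_mul, Matrix.smul_apply, smul_eq_mul, mul_one]
  exact rowsum S h

lemma AJ_eq (S : Finset G) : adjMat (cayleyRel S) * allOnes G = (S.card : ℤ) • allOnes G := by
  rw [← Matrix.ext_iff]; intro g h
  rw [Matrix.mul_apply]
  simp only [allOnes, Matrix.of_apply, adj_apply, mul_one, Matrix.smul_apply, smul_eq_mul]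
  exact colsum S g

lemma cond5_iff (S : Finset G) (μ lam t : ℤ) :
    (adjMat (cayleyRel S) * adjMat (cayleyRel S) =
      t • (1 : Matrix G G ℤ) + lam • adjMat (cayleyRel S) + μ • (allOnes G - 1 - adjMat (cayleyRel S)))
    ↔ ∀ d : G, (∑ s ∈ S, ∑ s' ∈ S, if s * s' = d then (1:ℤ) else 0)
        = t * (if d = 1 then 1 else 0) + lam * (if d ∈ S then 1 else 0)
          + μ * (1 - (if d = 1 then 1 else 0) - (if d ∈ S then 1 else 0)) := by
  rw [← Matrix.ext_iff]
  constructor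
  · intro H d
    have h := H 1 d
    rw [mulA_apply] at h
    simp only [Matrix.add_apply, Matrix.smul_apply, Matrix.sub_apply, Matrix.one_apply,
      allOnes, Matrix.of_apply, adj_apply, smul_eq_mul, inv_one, one_mul] at h
    simpa [eq_comm] using h
  · intro H g h
    have h5 := H (g⁻¹ * h)
    rw [mulA_apply]
    simp only [Matrix.add_apply, Matrix.smul_apply, Matrix.sub_apply, Matrix.one_apply,
      allOnes, Matrix.of_apply, adj_apply, smul_eq_mul]
    simpa [inv_mul_eq_one] using h5

end MatrixSide

section Dihedral

variable {n : ℕ} (X Y : Finset (ZMod n))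

lemma dihSet_eq : dihSet n X Y
    = X.image DihedralGroup.r ∪ Y.image (fun b => DihedralGroup.sr (-b)) := by
  unfold dihSet
  congr 1
  apply Finset.image_congr
  intro a _
  simp [DihedralGroup.r_mul_sr, zero_sub]

lemma mem_dih_r (a : ZMod n) : DihedralGroup.r a ∈ dihSet n X Y ↔ a ∈ X := by
  rw [dihSet_eq]; simp

lemma mem_dih_sr (c : ZMod n) : DihedralGroup.sr c ∈ dihSet n X Y ↔ -c ∈ Y := by
  rw [dihSet_eq]
  simp only [Finset.mem_union, Finset.mem_image]
  constructor
  · rintro (⟨a, -, h⟩ | ⟨b, hb, h⟩)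
    · exact absurd h (by simp)
    · obtain rfl : -b = c := by simpa using h
      simpa using hb
  · intro h
    exact Or.inr ⟨-c, h, by simp⟩

lemma dih_disj : Disjoint (X.image DihedralGroup.r)
    (Y.image (fun b => DihedralGroup.sr (-b))) := by
  rw [Finset.disjoint_left]
  intro a ha hb
  simp only [Finset.mem_image] at ha hb
  obtain ⟨x, -, rfl⟩ := ha
  obtain ⟨y, -, hy⟩ := hb
  exact absurd hy (by simp)

lemma rinj : ∀ x ∈ X, ∀ y ∈ X, DihedralGroup.r x = DihedralGroup.r y → x = y := by
  intro x _ y _ h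
  simpa using h

lemma sinj : ∀ x ∈ Y, ∀ y ∈ Y,
    (fun b => DihedralGroup.sr (-b : ZMod n)) x = (fun b => DihedralGroup.sr (-b)) y → x = y := by
  intro x _ y _ h
  simpa using h

lemma card_dih : ((dihSet n X Y).card : ℤ) = X.card + Y.card := by
  rw [dihSet_eq, Finset.card_union_of_disjoint (dih_disj X Y),
    Finset.card_image_of_injOn fun x hx => rinj X x hx,
    Finset.card_image_of_injOn fun x hx => sinj Y x hx]
  push_cast
  ring

lemma count_split (d : DihedralGroup n) :
    (∑ s ∈ dihSet n X Y, ∑ s' ∈ dihSet n X Y, if s * s' = d then (1:ℤ) else 0)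
    = ((∑ a ∈ X, ∑ b ∈ X, if DihedralGroup.r (a + b) = d then (1:ℤ) else 0)
      + ∑ a ∈ X, ∑ b ∈ Y, if DihedralGroup.sr (-b - a) = d then (1:ℤ) else 0)
      + ((∑ b ∈ Y, ∑ a ∈ X, if DihedralGroup.sr (-b + a) = d then (1:ℤ) else 0)
      + ∑ b ∈ Y, ∑ b' ∈ Y, if DihedralGroup.r (-b' + b) = d then (1:ℤ) else 0) := by
  rw [dihSet_eq]
  rw [Finset.sum_union (dih_disj X Y), Finset.sum_image (rinj X), Finset.sum_image (sinj Y)]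
  simp only [Finset.sum_union (dih_disj X Y), Finset.sum_image (rinj X),
    Finset.sum_image (sinj Y), DihedralGroup.r_mul_r, DihedralGroup.r_mul_sr,
    DihedralGroup.sr_mul_r, DihedralGroup.sr_mul_sr, sub_neg_eq_add]
  rw [Finset.sum_add_distrib, Finset.sum_add_distrib]
  rfl

end Dihedral

/-- `Cay(D_n, X ∪ Yτ)` is a DSRG with parameters `(2n, |X|+|Y|, μ, λ, t)`
iff in `ℤ[C_n]`: (i) `Ȳ(X̄ + X^{(−1)}‾) = (λ−μ)Ȳ + μC̄_n` and
(ii) `X̄² + ȲY^{(−1)}‾ = (t−μ)e + (λ−μ)X̄ + μC̄_n`. -/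
theorem dihedrant_isDSRG_iff (n : ℕ) [NeZero n] (X Y : Finset (ZMod n))
    (h0 : (0 : ZMod n) ∉ X) (μ lam t : ℤ) :
    IsDSRG (cayleyRel (dihSet n X Y)) (2 * (n : ℤ)) ((X.card : ℤ) + (Y.card : ℤ)) μ lam t ↔
      (fbar Y * (fbar X + fbarInv X) = (lam - μ) • fbar Y + μ • cbar n ∧
       fbar X * fbar X + fbar Y * fbarInv Y =
         (t - μ) • (1 : AddMonoidAlgebra ℤ (ZMod n)) + (lam - μ) • fbar X + μ • cbar n) := by
  classical
  have one_coeff : ∀ d : ZMod n, (1 : AddMonoidAlgebra ℤ (ZMod n)).coeff d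
      = if (0 : ZMod n) = d then 1 else 0 := by
    intro d
    rw [AddMonoidAlgebra.one_def]
    exact Finsupp.single_apply
  have hrs : ∀ (x y : ZMod n), (DihedralGroup.r x = DihedralGroup.sr y) = False := by
    intros; simp
  have hsr : ∀ (x y : ZMod n), (DihedralGroup.sr x = DihedralGroup.r y) = False := by
    intros; simp
  have hIff : IsDSRG (cayleyRel (dihSet n X Y)) (2 * (n : ℤ))
      ((X.card : ℤ) + (Y.card : ℤ)) μ lam t ↔
      (adjMat (cayleyRel (dihSet n X Y)) * adjMat (cayleyRel (dihSet n X Y)) =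
        t • (1 : Matrix (DihedralGroup n) (DihedralGroup n) ℤ)
        + lam • adjMat (cayleyRel (dihSet n X Y))
        + μ • (allOnes (DihedralGroup n) - 1 - adjMat (cayleyRel (dihSet n X Y)))) := by
    constructor
    · rintro ⟨-, -, -, -, h⟩; exact h
    · intro h
      refine ⟨?_, ?_, ?_, ?_, h⟩
      · intro i hi
        have h1 : (1 : DihedralGroup n) ∈ dihSet n X Y := by
          have := hi
          rw [cayleyRel, inv_mul_cancel] at this
          exact this
        rw [DihedralGroup.one_def, mem_dih_r] at h1
        exact h0 h1
      · rw [DihedralGroup.card]; push_cast; ring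
      · rw [JA_eq, card_dih]
      · rw [AJ_eq, card_dih]
  rw [hIff, cond5_iff]
  -- coefficient computations
  have hL2 : ∀ c : ZMod n, (fbar X * fbar X + fbar Y * fbarInv Y).coeff c
      = ∑ s ∈ dihSet n X Y, ∑ s' ∈ dihSet n X Y,
          if s * s' = DihedralGroup.r c then (1:ℤ) else 0 := by
    intro c
    rw [count_split X Y (DihedralGroup.r c)]
    rw [AddMonoidAlgebra.coeff_add, Finsupp.add_apply]
    simp only [fbar_eq, fbarInv_eq, ssum_mul_apply]
    simp only [id_eq, hsr, if_false, Finset.sum_const_zero, add_zero, zero_add,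
      DihedralGroup.r.injEq]
    congr 1
    refine Finset.sum_congr rfl fun b _ => Finset.sum_congr rfl fun b' _ =>
      if_congr ⟨fun h => by linear_combination h, fun h => by linear_combination h⟩ rfl rfl
  have hR2 : ∀ c : ZMod n,
      ((t - μ) • (1 : AddMonoidAlgebra ℤ (ZMod n)) + (lam - μ) • fbar X + μ • cbar n).coeff c
      = t * (if DihedralGroup.r c = 1 then 1 else 0)
        + lam * (if DihedralGroup.r c ∈ dihSet n X Y then 1 else 0)
        + μ * (1 - (if DihedralGroup.r c = 1 then 1 else 0)
          - (if DihedralGroup.r c ∈ dihSet n X Y then 1 else 0)) := by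
    intro c
    rw [AddMonoidAlgebra.coeff_add, Finsupp.add_apply, AddMonoidAlgebra.coeff_add,
      Finsupp.add_apply, AddMonoidAlgebra.coeff_smul_apply, AddMonoidAlgebra.coeff_smul_apply,
      AddMonoidAlgebra.coeff_smul_apply, one_coeff, fbar_apply, cbar_apply, smul_eq_mul, smul_eq_mul,
      smul_eq_mul]
    simp only [DihedralGroup.one_def, DihedralGroup.r.injEq, mem_dih_r,
      show ∀ x : ZMod n, ((0 : ZMod n) = x) = (x = 0) from fun x => propext eq_comm]
    ring
  have hL1 : ∀ d : ZMod n, (fbar Y * (fbar X + fbarInv X)).coeff d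
      = ∑ s ∈ dihSet n X Y, ∑ s' ∈ dihSet n X Y,
          if s * s' = DihedralGroup.sr (-d) then (1:ℤ) else 0 := by
    intro d
    rw [count_split X Y (DihedralGroup.sr (-d))]
    rw [mul_add, AddMonoidAlgebra.coeff_add, Finsupp.add_apply]
    simp only [fbar_eq, fbarInv_eq, ssum_mul_apply]
    simp only [id_eq, hrs, if_false, Finset.sum_const_zero, add_zero, zero_add,
      DihedralGroup.sr.injEq]
    congr 1
    · rw [Finset.sum_comm]
      refine Finset.sum_congr rfl fun a _ => Finset.sum_congr rfl fun b _ =>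
        if_congr ⟨fun h => by linear_combination -h, fun h => by linear_combination -h⟩ rfl rfl
    · refine Finset.sum_congr rfl fun b _ => Finset.sum_congr rfl fun a _ =>
        if_congr ⟨fun h => by linear_combination -h, fun h => by linear_combination -h⟩ rfl rfl
  have hR1 : ∀ d : ZMod n, ((lam - μ) • fbar Y + μ • cbar n).coeff d
      = t * (if DihedralGroup.sr (-d) = 1 then 1 else 0)
        + lam * (if DihedralGroup.sr (-d) ∈ dihSet n X Y then 1 else 0)
        + μ * (1 - (if DihedralGroup.sr (-d) = 1 then 1 else 0)
          - (if DihedralGroup.sr (-d) ∈ dihSet n X Y then 1 else 0)) := by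
    intro d
    rw [AddMonoidAlgebra.coeff_add, Finsupp.add_apply, AddMonoidAlgebra.coeff_smul_apply,
      AddMonoidAlgebra.coeff_smul_apply, fbar_apply, cbar_apply,
      smul_eq_mul, smul_eq_mul]
    simp only [DihedralGroup.one_def, hsr, if_false, mem_dih_sr, neg_neg]
    ring
  constructor
  · intro H
    constructor
    · refine AddMonoidAlgebra.ext (Finsupp.ext fun d => ?_)
      rw [hL1 d, hR1 d]
      exact H (DihedralGroup.sr (-d))
    · refine AddMonoidAlgebra.ext (Finsupp.ext fun c => ?_)
      rw [hL2 c, hR2 c]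
      exact H (DihedralGroup.r c)
  · rintro ⟨H1, H2⟩ d
    rcases d with c | c
    · have h := Finsupp.ext_iff.mp (congrArg AddMonoidAlgebra.coeff H2) c
      rw [hL2 c, hR2 c] at h
      exact h
    · have h := Finsupp.ext_iff.mp (congrArg AddMonoidAlgebra.coeff H1) (-c)
      rw [hL1 (-c), hR1 (-c)] at h
      simpa only [neg_neg] using h
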